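/- Recovery of the least ambiguous sets score in the limit λ → ∞: for every i ∈ {1,…,K}, the rescaled nonconformity score satisfies lim_{λ→∞} r_λ(i)/λ = 1/γ_i. -/
import Mathlib

open Finset

noncomputable def Gam (γ : ℕ → ℝ) (k : ℕ) : ℝ := ∑ i ∈ Finset.Icc 1 k, γ i

noncomputable def gfun (lam : ℝ) (k : ℕ) : ℝ := (if 1 < k then 1 else 0) + lam * (k : ℝ)

noncomputable def Psi (γ : ℕ → ℝ) (lam η : ℝ) (k : ℕ) : ℝ := gfun lam k - η * Gam γ k

noncomputable def kappa (γ : ℕ → ℝ) (lam : ℝ) (K : ℕ) (η : ℝ) : ℕ :=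
  sInf {k : ℕ | k ≤ K ∧ ∀ j ≤ K, Psi γ lam η k ≤ Psi γ lam η j}

noncomputable def score (γ : ℕ → ℝ) (lam : ℝ) (K : ℕ) (i : ℕ) : ℝ :=
  sInf {η : ℝ | 0 ≤ η ∧ i ≤ kappa γ lam K η}

noncomputable def ell (γ : ℕ → ℝ) (lam η : ℝ) (S : Finset ℕ) : ℝ :=
  (if 1 < S.card then 1 else 0) + lam * (S.card : ℝ) - η * ∑ i ∈ S, γ i

noncomputable def etaSlope (γ : ℕ → ℝ) (lam : ℝ) (v : ℕ → ℕ) (i : ℕ) : ℝ :=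
  (gfun lam (v i) - gfun lam (v (i - 1))) / (Gam γ (v i) - Gam γ (v (i - 1)))

lemma kappa_mem (γ : ℕ → ℝ) (lam : ℝ) (K : ℕ) (η : ℝ) :
    kappa γ lam K η ≤ K ∧ ∀ j ≤ K, Psi γ lam η (kappa γ lam K η) ≤ Psi γ lam η j := by
  have hne : {k : ℕ | k ≤ K ∧ ∀ j ≤ K, Psi γ lam η k ≤ Psi γ lam η j}.Nonempty := by
    obtain ⟨k, hk, hmin⟩ := Finset.exists_min_image (Finset.Icc 0 K) (Psi γ lam η) ⟨0, by simp⟩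
    exact ⟨k, by simpa using hk, fun j hj => hmin j (by simpa using hj)⟩
  exact Nat.sInf_mem hne

lemma gam_sub (γ : ℕ → ℝ) {j i : ℕ} (h : j ≤ i) :
    Gam γ i - Gam γ j = ∑ m ∈ Finset.Ioc j i, γ m := by
  unfold Gam
  rw [show Finset.Icc 1 i = Finset.Ioc 0 i from Finset.Icc_add_one_left_eq_Ioc 0 i,
      show Finset.Icc 1 j = Finset.Ioc 0 j from Finset.Icc_add_one_left_eq_Ioc 0 j,
      ← Finset.sum_Ioc_consecutive γ (Nat.zero_le j) h]
  ring

/-- Membership giving the upper bound: (lam+2)/γ i is in the score set. -/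
lemma score_mem (K : ℕ) (γ : ℕ → ℝ)
    (hmono : ∀ i j : ℕ, 1 ≤ i → i ≤ j → j ≤ K → γ j ≤ γ i)
    (hposK : 0 < γ K) (i : ℕ) (hi1 : 1 ≤ i) (hiK : i ≤ K)
    (lam : ℝ) (hlam : 0 ≤ lam) :
    0 ≤ (lam + 2) / γ i ∧ i ≤ kappa γ lam K ((lam + 2) / γ i) := by
  have hγi : 0 < γ i := lt_of_lt_of_le hposK (hmono i K hi1 hiK le_rfl)
  set η := (lam + 2) / γ i with hη
  have hη0 : 0 ≤ η := div_nonneg (by linarith) hγi.le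
  refine ⟨hη0, ?_⟩
  obtain ⟨hkK, hkmin⟩ := kappa_mem γ lam K η
  set k := kappa γ lam K η with hkdef
  by_contra hcon
  push_neg at hcon
  have hki : k ≤ i := hcon.le
  -- sum lower bound
  have hcard : (Finset.Ioc k i).card = i - k := Nat.card_Ioc k i
  have hsumlb : ((i - k : ℕ) : ℝ) * γ i ≤ Gam γ i - Gam γ k := by
    rw [gam_sub γ hki]
    calc ((i - k : ℕ) : ℝ) * γ i = (Finset.Ioc k i).card • γ i := by
          rw [hcard, nsmul_eq_mul]
      _ ≤ ∑ m ∈ Finset.Ioc k i, γ m := by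
          apply Finset.card_nsmul_le_sum
          intro m hm
          simp only [Finset.mem_Ioc] at hm
          exact hmono m i (Nat.one_le_iff_ne_zero.mpr (by omega)) hm.2 hiK
  have hcast : ((i - k : ℕ) : ℝ) = (i : ℝ) - (k : ℝ) := by
    push_cast [Nat.cast_sub hki]; ring
  have hone : (1 : ℝ) ≤ ((i - k : ℕ) : ℝ) := by
    have : 1 ≤ i - k := by omega
    exact_mod_cast this
  have hmul : η * (((i - k : ℕ) : ℝ) * γ i) ≤ η * (Gam γ i - Gam γ k) :=
    mul_le_mul_of_nonneg_left hsumlb hη0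
  have hηγ : η * γ i = lam + 2 := by
    rw [hη]; field_simp
  have hPsi : Psi γ lam η i < Psi γ lam η k := by
    unfold Psi gfun
    have hind1 : (if 1 < i then (1:ℝ) else 0) ≤ 1 := by split_ifs <;> norm_num
    have hind2 : (0:ℝ) ≤ (if 1 < k then (1:ℝ) else 0) := by split_ifs <;> norm_num
    nlinarith [hmul, hcast, hone, hηγ]
  exact absurd (hkmin i hiK) (not_le.mpr hPsi)

lemma score_ge (K : ℕ) (γ : ℕ → ℝ)
    (hmono : ∀ i j : ℕ, 1 ≤ i → i ≤ j → j ≤ K → γ j ≤ γ i)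
    (hposK : 0 < γ K) (i : ℕ) (hi1 : 1 ≤ i) (hiK : i ≤ K)
    (lam : ℝ) (hlam : 0 ≤ lam) :
    (lam - 1) / γ i ≤ score γ lam K i := by
  have hγi : 0 < γ i := lt_of_lt_of_le hposK (hmono i K hi1 hiK le_rfl)
  apply le_csInf ⟨(lam + 2) / γ i, score_mem K γ hmono hposK i hi1 hiK lam hlam⟩
  rintro η ⟨hη0, hik⟩
  by_contra hcon
  push_neg at hcon
  have hηγ : η * γ i < lam - 1 := (lt_div_iff₀ hγi).mp hcon
  obtain ⟨hkK, hkmin⟩ := kappa_mem γ lam K η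
  set k := kappa γ lam K η with hkdef
  have hik' : i ≤ k := hik
  have hi1k : i - 1 ≤ K := by omega
  have hmin := hkmin (i - 1) hi1k
  -- sum upper bound
  have hle : i - 1 ≤ k := by omega
  have hcard : (Finset.Ioc (i-1) k).card = k - (i-1) := Nat.card_Ioc (i-1) k
  have hsumub : Gam γ k - Gam γ (i-1) ≤ ((k - (i-1) : ℕ) : ℝ) * γ i := by
    rw [gam_sub γ hle]
    calc ∑ m ∈ Finset.Ioc (i-1) k, γ m ≤ (Finset.Ioc (i-1) k).card • γ i := by
          apply Finset.sum_le_card_nsmul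
          intro m hm
          simp only [Finset.mem_Ioc] at hm
          exact hmono i m hi1 (by omega) (le_trans hm.2 hkK)
      _ = ((k - (i-1) : ℕ) : ℝ) * γ i := by rw [hcard, nsmul_eq_mul]
  have hcast : ((k - (i-1) : ℕ) : ℝ) = (k : ℝ) - ((i-1 : ℕ) : ℝ) := by
    push_cast [Nat.cast_sub hle]; ring
  have hone : (1 : ℝ) ≤ ((k - (i-1) : ℕ) : ℝ) := by
    have : 1 ≤ k - (i-1) := by omega
    exact_mod_cast this
  have hmul : η * (Gam γ k - Gam γ (i-1)) ≤ η * (((k - (i-1) : ℕ) : ℝ) * γ i) :=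
    mul_le_mul_of_nonneg_left hsumub hη0
  have hind : (if 1 < i - 1 then (1:ℝ) else 0) ≤ (if 1 < k then (1:ℝ) else 0) := by
    split_ifs with h1 h2
    · norm_num
    · exact absurd (by omega : 1 < k) h2
    · norm_num
    · norm_num
  unfold Psi gfun at hmin
  nlinarith [hmul, hcast, hone, hηγ, hind, mul_le_mul_of_nonneg_right hηγ.le (le_of_lt (lt_of_lt_of_le zero_lt_one hone))]

theorem stmt13 (K : ℕ) (hK : 1 ≤ K) (γ : ℕ → ℝ)
    (hmono : ∀ i j : ℕ, 1 ≤ i → i ≤ j → j ≤ K → γ j ≤ γ i)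
    (hposK : 0 < γ K)
    (hsum : ∑ i ∈ Finset.Icc 1 K, γ i = 1)
    (i : ℕ) (hi1 : 1 ≤ i) (hiK : i ≤ K) :
    Filter.Tendsto (fun lam : ℝ => score γ lam K i / lam) Filter.atTop
      (nhds (1 / γ i)) := by
  have hγi : 0 < γ i := lt_of_lt_of_le hposK (hmono i K hi1 hiK le_rfl)
  have hlow : Filter.Tendsto (fun lam : ℝ => (1 - lam⁻¹) / γ i) Filter.atTop (nhds (1 / γ i)) := by
    have h := ((tendsto_const_nhds (x := (1:ℝ)) (f := Filter.atTop)).sub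
      tendsto_inv_atTop_zero).div_const (γ i)
    simpa using h
  have hupp : Filter.Tendsto (fun lam : ℝ => (1 + 2 * lam⁻¹) / γ i) Filter.atTop (nhds (1 / γ i)) := by
    have h2 : Filter.Tendsto (fun lam : ℝ => 2 * lam⁻¹) Filter.atTop (nhds 0) := by
      simpa using tendsto_inv_atTop_zero.const_mul (2:ℝ)
    have h := ((tendsto_const_nhds (x := (1:ℝ)) (f := Filter.atTop)).add h2).div_const (γ i)
    simpa using h
  apply tendsto_of_tendsto_of_tendsto_of_le_of_le' hlow hupp
  · filter_upwards [Filter.eventually_ge_atTop (1:ℝ)] with lam hlam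
    have hlam0 : (0:ℝ) < lam := by linarith
    have h1 := score_ge K γ hmono hposK i hi1 hiK lam (by linarith)
    have : (lam - 1) / γ i / lam ≤ score γ lam K i / lam := by gcongr
    calc (1 - lam⁻¹) / γ i = (lam - 1) / γ i / lam := by
          rw [div_right_comm]
          congr 1
          field_simp
      _ ≤ score γ lam K i / lam := this
  · filter_upwards [Filter.eventually_ge_atTop (1:ℝ)] with lam hlam
    have hlam0 : (0:ℝ) < lam := by linarith
    obtain ⟨h0, hmem⟩ := score_mem K γ hmono hposK i hi1 hiK lam (by linarith)
    have hbdd : BddBelow {η : ℝ | 0 ≤ η ∧ i ≤ kappa γ lam K η} := ⟨0, fun x hx => hx.1⟩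
    have h1 : score γ lam K i ≤ (lam + 2) / γ i := csInf_le hbdd ⟨h0, hmem⟩
    have : score γ lam K i / lam ≤ (lam + 2) / γ i / lam := by gcongr
    calc score γ lam K i / lam ≤ (lam + 2) / γ i / lam := this
      _ = (1 + 2 * lam⁻¹) / γ i := by
          rw [div_right_comm]
          congr 1
          field_simp
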